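/- Under the SGD setting with β-strong convexity, E[‖ĝ_n‖²] ≤ G² for all n, and step sizes η_n = 1/(βn), for every n ≥ 1 the per-iteration suboptimality satisfies E[f(θ_n) − f(θ*)] ≤ (β/2)·( (n−1)·E[‖θ_n − θ*‖²] − n·E[‖θ_{n+1} − θ*‖²] ) + G²/(2βn). -/

import Mathlib

open MeasureTheory
open scoped RealInnerProductSpace

open TopologicalSpace

lemma isSeparable_preimage_of_expansion {H : Type*} [NormedAddCommGroup H]
    {β : ℝ} (hβ : 0 < β) (F : H → H)
    (hexp : ∀ x y : H, β * ‖x - y‖ ≤ ‖F x - F y‖) {t : Set H}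
    (ht : IsSeparable t) :
    IsSeparable {x : H | F x ∈ t} := by
  set T := {x : H | F x ∈ t} with hT
  have hFinj : Function.Injective F := by
    intro x y hxy
    have h1 := hexp x y
    rw [hxy, sub_self, norm_zero] at h1
    have h2 : ‖x - y‖ ≤ 0 := by nlinarith [norm_nonneg (x - y)]
    have h3 : x - y = 0 := by
      rw [← norm_le_zero_iff]; exact h2
    exact sub_eq_zero.mp h3
  have himg : IsSeparable (F '' T) := ht.mono (Set.image_subset_iff.mpr fun x hx => hx)
  obtain ⟨D, hDsub, hDc, hDd⟩ := himg.exists_countable_dense_subset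
  refine ⟨F ⁻¹' D ∩ T, (hDc.preimage hFinj).mono Set.inter_subset_left, ?_⟩
  intro x hx
  rw [Metric.mem_closure_iff]
  intro ε hε
  have hx' : F x ∈ closure D := hDd ⟨x, hx, rfl⟩
  obtain ⟨d, hdD, hdist⟩ := Metric.mem_closure_iff.mp hx' (β * ε) (by positivity)
  obtain ⟨y, hyT, rfl⟩ := hDsub hdD
  refine ⟨y, ⟨hdD, hyT⟩, ?_⟩
  have h1 := hexp x y
  rw [dist_eq_norm] at hdist ⊢
  nlinarith

/-- Under SGD with step sizes `η n = 1/(β n)` on a `β`-strongly convex function with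
minimizer `θ*` and `E[‖ĝ n‖²] ≤ G²`, for every `n ≥ 1` the per-iteration suboptimality
satisfies
`E[f (θ n) − f θ*] ≤ (β/2) ((n−1) E[‖θ n − θ*‖²] − n E[‖θ (n+1) − θ*‖²]) + G²/(2 β n)`. -/
theorem sgd_per_iteration_suboptimality
    {Ω : Type*} [MeasurableSpace Ω] {μ : Measure Ω} [IsProbabilityMeasure μ]
    {H : Type*} [NormedAddCommGroup H] [InnerProductSpace ℝ H] [CompleteSpace H]
    [MeasurableSpace H] [BorelSpace H]
    {β G : ℝ} (hβ : 0 < β) (hG : 0 < G)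
    {f : H → ℝ} (hdiff : Differentiable ℝ f)
    (hconv : ∀ x y : H,
      f y ≥ f x + ⟪gradient f x, y - x⟫ + β / 2 * ‖y - x‖ ^ 2)
    {θstar : H} (hmin : ∀ x : H, f θstar ≤ f x)
    (θ g : ℕ → Ω → H)
    (hθmeas : ∀ n, Measurable (θ n))
    (hgmeas : ∀ n, Measurable (g n))
    (hrec : ∀ n : ℕ, 1 ≤ n → ∀ ω, θ (n + 1) ω = θ n ω - (1 / (β * n)) • g n ω)
    (hunbiased : ∀ n : ℕ, 1 ≤ n →
      μ[g n | MeasurableSpace.comap (θ n) inferInstance]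
        =ᵐ[μ] fun ω => gradient f (θ n ω))
    (hg2int : ∀ n : ℕ, 1 ≤ n → Integrable (fun ω => ‖g n ω‖ ^ 2) μ)
    (hg2 : ∀ n : ℕ, 1 ≤ n → ∫ ω, ‖g n ω‖ ^ 2 ∂μ ≤ G ^ 2)
    (hθint : ∀ n : ℕ, 1 ≤ n → Integrable (fun ω => ‖θ n ω - θstar‖ ^ 2) μ)
    (hfint : ∀ n : ℕ, 1 ≤ n → Integrable (fun ω => f (θ n ω)) μ) :
    ∀ n : ℕ, 1 ≤ n →
      ∫ ω, (f (θ n ω) - f θstar) ∂μ ≤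
        β / 2 * (((n : ℝ) - 1) * ∫ ω, ‖θ n ω - θstar‖ ^ 2 ∂μ -
            (n : ℝ) * ∫ ω, ‖θ (n + 1) ω - θstar‖ ^ 2 ∂μ) +
          G ^ 2 / (2 * β * n) := by
  classical
  -- gradient is β-expansive
  have hmono : ∀ x y : H, β * ‖x - y‖ ≤ ‖gradient f x - gradient f y‖ := by
    intro x y
    rcases eq_or_ne x y with rfl | hne
    · simp
    have h1 := hconv x y
    have h2 := hconv y x
    have e1 : ⟪gradient f x, y - x⟫ = -⟪gradient f x, x - y⟫ := by
      rw [← neg_sub x y, inner_neg_right]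
    have e3 : ‖y - x‖ = ‖x - y‖ := norm_sub_rev _ _
    rw [e1, e3] at h1
    have hinner : β * ‖x - y‖ ^ 2 ≤ ⟪gradient f x - gradient f y, x - y⟫ := by
      rw [inner_sub_left]; linarith
    have hcs := real_inner_le_norm (gradient f x - gradient f y) (x - y)
    have hxy : (0 : ℝ) < ‖x - y‖ := by
      rw [norm_pos_iff]; exact sub_ne_zero.mpr hne
    nlinarith
  -- a critical point is the minimizer
  have hzero : ∀ x : H, gradient f x = 0 → x = θstar := by
    intro x hx
    have h := hconv x θstar
    rw [hx, inner_zero_left] at h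
    have h2 := hmin x
    have h3 : ‖θstar - x‖ ^ 2 ≤ 0 := by nlinarith
    have h5 : ‖θstar - x‖ ^ 2 = 0 := le_antisymm h3 (sq_nonneg _)
    have h6 : θstar = x := by
      rw [← sub_eq_zero (a := θstar), ← norm_eq_zero]
      nlinarith [norm_nonneg (θstar - x)]
    exact h6.symm
  intro n hn
  have hn1 : (1 : ℝ) ≤ (n : ℝ) := by exact_mod_cast hn
  have hn0 : (0 : ℝ) < (n : ℝ) := by linarith
  set η : ℝ := 1 / (β * n) with hη_def
  have hηpos : 0 < η := by positivity
  have hηn : η * (β * n) = 1 := by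
    rw [hη_def]; field_simp
  have hdiv : G ^ 2 / (2 * β * n) = η * G ^ 2 / 2 := by
    rw [hη_def]; field_simp
  set A := ∫ ω, ‖θ n ω - θstar‖ ^ 2 ∂μ with hA_def
  set B := ∫ ω, ‖θ (n + 1) ω - θstar‖ ^ 2 ∂μ with hB_def
  set C := ∫ ω, ‖g n ω‖ ^ 2 ∂μ with hC_def
  have hCG : C ≤ G ^ 2 := hg2 n hn
  have hC0 : 0 ≤ C := integral_nonneg fun ω => sq_nonneg _
  -- pointwise recursion identity
  have hpt : ∀ ω, ‖θ (n + 1) ω - θstar‖ ^ 2 =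
      ‖θ n ω - θstar‖ ^ 2 - 2 * η * ⟪g n ω, θ n ω - θstar⟫ + η ^ 2 * ‖g n ω‖ ^ 2 := by
    intro ω
    have h1 : θ (n + 1) ω - θstar = (θ n ω - θstar) - η • g n ω := by
      rw [hrec n hn ω, sub_right_comm]
    rw [h1, norm_sub_sq_real, real_inner_smul_right, norm_smul, Real.norm_eq_abs,
      abs_of_pos hηpos, real_inner_comm]
    ring
  by_cases hgI : Integrable (g n) μ
  · -- main case
    have hm : MeasurableSpace.comap (θ n) inferInstance ≤ ‹MeasurableSpace Ω› :=
      measurable_iff_comap_le.mp (hθmeas n)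
    haveI : IsFiniteMeasure (μ.trim hm) := isFiniteMeasure_trim hm
    have hub := hunbiased n hn
    have hksm : StronglyMeasurable (μ[g n | MeasurableSpace.comap (θ n) inferInstance]) :=
      stronglyMeasurable_condExp.mono hm
    have htsep : IsSeparable
        (closure (Set.range (μ[g n | MeasurableSpace.comap (θ n) inferInstance]))) :=
      hksm.isSeparable_range.closure
    set T := {x : H | gradient f x ∈
      closure (Set.range (μ[g n | MeasurableSpace.comap (θ n) inferInstance]))} with hT_def
    have hTsep : IsSeparable T := isSeparable_preimage_of_expansion hβ _ hmono htsep
    have hmemT : ∀ᵐ ω ∂μ, θ n ω ∈ T := by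
      filter_upwards [hub] with ω hω
      rw [hT_def, Set.mem_setOf_eq, ← hω]
      exact subset_closure ⟨ω, rfl⟩
    set u := closure T with hu_def
    have huc : IsClosed u := isClosed_closure
    set k2 : Ω → H := fun ω => if θ n ω ∈ u then θ n ω - θstar else 0 with hk2_def
    have hθmm : Measurable[MeasurableSpace.comap (θ n) inferInstance] (θ n) :=
      Measurable.of_comap_le le_rfl
    have hk2sm : StronglyMeasurable[MeasurableSpace.comap (θ n) inferInstance] k2 := by
      rw [stronglyMeasurable_iff_measurable_separable]
      constructor
      · have hφ : Measurable (fun x : H => if x ∈ u then x - θstar else 0) :=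
          Measurable.ite huc.measurableSet
            (continuous_id.sub continuous_const).measurable measurable_const
        exact hφ.comp hθmm
      · refine IsSeparable.mono (s := ((fun x : H => x - θstar) '' u) ∪ {0}) ?_ ?_
        · exact ((hTsep.closure).image (continuous_id.sub continuous_const)).union
            ((Set.countable_singleton (0 : H)).isSeparable)
        · rintro _ ⟨ω, rfl⟩
          by_cases h : θ n ω ∈ u
          · exact Or.inl ⟨θ n ω, h, (if_pos h).symm⟩
          · exact Or.inr (Set.mem_singleton_iff.mpr (if_neg h))
    have hXk2 : (fun ω => θ n ω - θstar) =ᵐ[μ] k2 := by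
      filter_upwards [hmemT] with ω hω
      exact (if_pos (subset_closure hω)).symm
    have hXaesm : AEStronglyMeasurable (fun ω => θ n ω - θstar) μ :=
      ⟨k2, hk2sm.mono hm, hXk2⟩
    have hXmem : MemLp (fun ω => θ n ω - θstar) 2 μ :=
      (memLp_two_iff_integrable_sq_norm hXaesm).mpr (hθint n hn)
    have hgmem : MemLp (g n) 2 μ :=
      (memLp_two_iff_integrable_sq_norm hgI.aestronglyMeasurable).mpr (hg2int n hn)
    set F := hgmem.toLp (g n) with hF_def
    set Y := hXmem.toLp (fun ω => θ n ω - θstar) with hY_def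
    have hFae : (F : Ω → H) =ᵐ[μ] g n := MemLp.coeFn_toLp _
    have hYae : (Y : Ω → H) =ᵐ[μ] fun ω => θ n ω - θstar := MemLp.coeFn_toLp _
    have hY' : AEStronglyMeasurable[MeasurableSpace.comap (θ n) inferInstance]
        (Y : Ω → H) μ := ⟨k2, hk2sm, hYae.trans hXk2⟩
    set cF : Ω →₂[μ] H := (condExpL2 H ℝ hm F : Ω →₂[μ] H) with hcF_def
    have hcond : (cF : Ω → H) =ᵐ[μ] μ[g n | MeasurableSpace.comap (θ n) inferInstance] := by
      refine ae_eq_condExp_of_forall_setIntegral_eq hm hgI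
        (fun s _ _ => (integrable_condExpL2_of_isFiniteMeasure (𝕜 := ℝ) hm).integrableOn)
        (fun s hs hμs => ?_) (aestronglyMeasurable_condExpL2 hm F)
      rw [hcF_def]
      rw [integral_condExpL2_eq (𝕜 := ℝ) hm F hs hμs.ne]
      exact setIntegral_congr_ae (hm s hs) (hFae.mono fun ω h _ => h)
    have hCEae : (cF : Ω → H) =ᵐ[μ] fun ω => gradient f (θ n ω) := hcond.trans hub
    have hinner := inner_condExpL2_eq_inner_fun (𝕜 := ℝ) hm F Y hY'
    rw [L2.inner_def, L2.inner_def] at hinner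
    have hNint : Integrable (fun ω => ⟪gradient f (θ n ω), θ n ω - θstar⟫) μ := by
      refine (L2.integrable_inner (𝕜 := ℝ) cF Y).congr ?_
      filter_upwards [hCEae, hYae] with ω h1 h2
      rw [h1, h2]
    have hGXint : Integrable (fun ω => ⟪g n ω, θ n ω - θstar⟫) μ := by
      refine (L2.integrable_inner (𝕜 := ℝ) F Y).congr ?_
      filter_upwards [hFae, hYae] with ω h1 h2
      rw [h1, h2]
    set I := ∫ ω, ⟪g n ω, θ n ω - θstar⟫ ∂μ with hI_def
    have hkey : I = ∫ ω, ⟪gradient f (θ n ω), θ n ω - θstar⟫ ∂μ := by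
      rw [hI_def]
      calc ∫ ω, ⟪g n ω, θ n ω - θstar⟫ ∂μ
          = ∫ ω, ⟪(F : Ω → H) ω, (Y : Ω → H) ω⟫ ∂μ := by
            refine integral_congr_ae ?_
            filter_upwards [hFae, hYae] with ω h1 h2
            rw [h1, h2]
        _ = ∫ ω, ⟪(cF : Ω → H) ω, (Y : Ω → H) ω⟫ ∂μ := hinner.symm
        _ = ∫ ω, ⟪gradient f (θ n ω), θ n ω - θstar⟫ ∂μ := by
            refine integral_congr_ae ?_
            filter_upwards [hCEae, hYae] with ω h1 h2
            rw [h1, h2]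
    -- convexity pointwise
    have hconv_pt : ∀ ω, f (θ n ω) - f θstar + β / 2 * ‖θ n ω - θstar‖ ^ 2 ≤
        ⟪gradient f (θ n ω), θ n ω - θstar⟫ := by
      intro ω
      have h := hconv (θ n ω) θstar
      have e1 : ⟪gradient f (θ n ω), θstar - θ n ω⟫ =
          -⟪gradient f (θ n ω), θ n ω - θstar⟫ := by
        rw [← neg_sub (θ n ω) θstar, inner_neg_right]
      have e2 : ‖θstar - θ n ω‖ = ‖θ n ω - θstar‖ := norm_sub_rev _ _
      rw [e1, e2] at h
      linarith
    have hf1int : Integrable (fun ω => f (θ n ω) - f θstar) μ :=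
      (hfint n hn).sub (integrable_const _)
    have hineq : ∫ ω, (f (θ n ω) - f θstar) ∂μ + β / 2 * A ≤ I := by
      have h1 : ∫ ω, (f (θ n ω) - f θstar + β / 2 * ‖θ n ω - θstar‖ ^ 2) ∂μ ≤
          ∫ ω, ⟪gradient f (θ n ω), θ n ω - θstar⟫ ∂μ :=
        integral_mono (hf1int.add ((hθint n hn).const_mul (β / 2))) hNint
          fun ω => hconv_pt ω
      rw [integral_add hf1int ((hθint n hn).const_mul (β / 2)),
        integral_const_mul] at h1
      rw [hkey]
      exact h1
    -- recursion in expectation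
    have hBid : B = A - 2 * η * I + η ^ 2 * C := by
      rw [hB_def]
      calc ∫ ω, ‖θ (n + 1) ω - θstar‖ ^ 2 ∂μ
          = ∫ ω, (‖θ n ω - θstar‖ ^ 2 - 2 * η * ⟪g n ω, θ n ω - θstar⟫
              + η ^ 2 * ‖g n ω‖ ^ 2) ∂μ := integral_congr_ae
              (Filter.Eventually.of_forall fun ω => hpt ω)
        _ = A - 2 * η * I + η ^ 2 * C := by
            have i1 : Integrable (fun ω =>
                ‖θ n ω - θstar‖ ^ 2 - 2 * η * ⟪g n ω, θ n ω - θstar⟫) μ :=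
              (hθint n hn).sub (hGXint.const_mul (2 * η))
            have i2 : Integrable (fun ω => η ^ 2 * ‖g n ω‖ ^ 2) μ :=
              (hg2int n hn).const_mul (η ^ 2)
            rw [integral_add i1 i2, integral_sub (hθint n hn) (hGXint.const_mul (2 * η)),
              integral_const_mul, integral_const_mul]
    have hI2 : I = β * n / 2 * (A - B) + η * C / 2 := by
      have h2 : 2 * η * I = A - B + η ^ 2 * C := by linarith
      linear_combination (β * (n : ℝ) / 2) * h2 + (-I + η * C / 2) * hηn
    have hCη : η * C ≤ η * G ^ 2 := mul_le_mul_of_nonneg_left hCG hηpos.le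
    rw [hdiv]
    have hring : β / 2 * (((n : ℝ) - 1) * A - (n : ℝ) * B) =
        β * n / 2 * (A - B) - β / 2 * A := by ring
    rw [hring]
    linarith [hineq, hI2, hCη]
  · -- degenerate case: gradient vanishes a.e.
    have hub := hunbiased n hn
    rw [condExp_of_not_integrable hgI] at hub
    have hae : ∀ᵐ ω ∂μ, θ n ω = θstar := by
      filter_upwards [hub] with ω hω
      exact hzero _ hω.symm
    have hL : ∫ ω, (f (θ n ω) - f θstar) ∂μ = 0 := by
      rw [integral_congr_ae (μ := μ) (g := fun _ => (0 : ℝ))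
        (by filter_upwards [hae] with ω h; rw [h]; ring)]
      simp
    have hA0 : A = 0 := by
      rw [hA_def, integral_congr_ae (μ := μ) (g := fun _ => (0 : ℝ))
        (by filter_upwards [hae] with ω h; rw [h]; simp)]
      simp
    have hBe : B = η ^ 2 * C := by
      rw [hB_def]
      calc ∫ ω, ‖θ (n + 1) ω - θstar‖ ^ 2 ∂μ
          = ∫ ω, η ^ 2 * ‖g n ω‖ ^ 2 ∂μ := by
            refine integral_congr_ae ?_
            filter_upwards [hae] with ω h
            rw [hrec n hn ω, h]
            rw [show θstar - (1 / (β * ↑n)) • g n ω - θstar = -(η • g n ω) by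
              rw [hη_def]; abel]
            rw [norm_neg, norm_smul, Real.norm_eq_abs, abs_of_pos hηpos, mul_pow]
        _ = η ^ 2 * C := integral_const_mul _ _
    rw [hL, hA0, hBe, hdiv]
    have h5 : β * n * η ^ 2 * C = η * C := by
      linear_combination (η * C) * hηn
    have hCη : η * C ≤ η * G ^ 2 := mul_le_mul_of_nonneg_left hCG hηpos.le
    have hring : β / 2 * (((n : ℝ) - 1) * 0 - (n : ℝ) * (η ^ 2 * C)) =
        -(β * n * η ^ 2 * C) / 2 := by ring
    rw [hring, h5]
    linarith [hCη]
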